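/- Let n ≥ 2, let i be an integer, and let ⋆ be a multiplicative Lie algebra structure on the generalized quaternion group Qₙ satisfying a⋆b = bⁱ. Then for all integers p one has a⋆bᵖ = bⁱᵖ and bᵖ⋆a = b⁻ⁱᵖ. -/

import Mathlib

/-- A multiplicative Lie algebra structure on a group `K` is a map `⋆ : K × K → K`
satisfying the five axioms below (writing `ˣy` for `x * y * x⁻¹`). -/
def IsMulLieStructure {K : Type*} [Group K] (star : K → K → K) : Prop :=
  (∀ x : K, star x x = 1) ∧
  (∀ x y z : K, star x (y * z) = star x y * (y * star x z * y⁻¹)) ∧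
  (∀ x y z : K, star (x * y) z = (x * star y z * x⁻¹) * star x z) ∧
  (∀ x y z : K,
    star (star x y) (y * z * y⁻¹) * star (star y z) (z * x * z⁻¹) *
      star (star z x) (x * y * x⁻¹) = 1) ∧
  (∀ x y z : K, z * star x y * z⁻¹ = star (z * x * z⁻¹) (z * y * z⁻¹))

/-- The element `a` of the generalized quaternion group `Qₙ` (with `a² = bⁿ`). -/
def Qa (n : ℕ) : QuaternionGroup n := QuaternionGroup.xa 0

/-- The element `b` of order `2n` of the generalized quaternion group `Qₙ`. -/
def Qb (n : ℕ) : QuaternionGroup n := QuaternionGroup.a 1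

lemma mulLie_star_one {K : Type*} [Group K] {star : K → K → K}
    (h : IsMulLieStructure star) (x : K) : star x 1 = 1 := by
  obtain ⟨h1, h2, h3, h4, h5⟩ := h
  have h := h2 x 1 1
  simp only [one_mul, mul_one, inv_one] at h
  have h' : star x 1 * 1 = star x 1 * star x 1 := by simpa using h
  exact (mul_left_cancel h').symm

lemma mulLie_antisymm {K : Type*} [Group K] {star : K → K → K}
    (h : IsMulLieStructure star) (x y : K) : star y x = (star x y)⁻¹ := by
  obtain ⟨h1, h2, h3, h4, h5⟩ := h
  have h := h1 (x * y)
  rw [h3 x y (x * y), h2 y x y, h2 x x y, h1 y, h1 x] at h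
  simp only [one_mul, mul_one] at h
  -- h : x * (star y x * (x * 1 * x⁻¹)) * x⁻¹ * (x * star x y * x⁻¹) = 1 (roughly)
  have h' : x * (star y x * star x y) * x⁻¹ = 1 := by
    rw [← h]; group
  have h'' : star y x * star x y = 1 := by
    have := congrArg (fun t => x⁻¹ * t * x) h'
    simpa [mul_assoc] using this
  exact eq_inv_of_mul_eq_one_left h''

theorem quaternion_star_powers (n : ℕ) (hn : 2 ≤ n) (i : ℤ)
    (star : QuaternionGroup n → QuaternionGroup n → QuaternionGroup n)
    (hstar : IsMulLieStructure star)
    (hab : star (Qa n) (Qb n) = (Qb n) ^ i) :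
    ∀ p : ℤ,
      star (Qa n) ((Qb n) ^ p) = (Qb n) ^ (i * p) ∧
      star ((Qb n) ^ p) (Qa n) = (Qb n) ^ (-(i * p)) := by
  obtain ⟨h1, h2, h3, h4, h5⟩ := hstar
  set a := Qa n
  set b := Qb n
  have hone : star a (1 : QuaternionGroup n) = 1 :=
    mulLie_star_one ⟨h1, h2, h3, h4, h5⟩ a
  have key : ∀ p : ℤ, star a (b ^ p) = b ^ (i * p) := by
    intro p
    induction p using Int.induction_on with
    | zero => simpa using hone
    | succ k ih =>
        have h := h2 a (b ^ (k : ℤ)) b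
        rw [ih, hab] at h
        rw [show b ^ ((k : ℤ) + 1) = b ^ (k : ℤ) * b from zpow_add_one b k, h]
        group
    | pred k ih =>
        have h := h2 a (b ^ (-(k : ℤ) - 1)) b
        rw [show b ^ (-(k : ℤ) - 1) * b = b ^ (-(k : ℤ)) from by
          rw [← zpow_add_one]; ring_nf] at h
        rw [ih, hab] at h
        have h' : star a (b ^ (-(k : ℤ) - 1)) =
            b ^ (i * -(k : ℤ)) * (b ^ (-(k : ℤ) - 1) * b ^ i * (b ^ (-(k : ℤ) - 1))⁻¹)⁻¹ := by
          rw [h]; group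
        rw [h']
        group
  intro p
  refine ⟨key p, ?_⟩
  rw [mulLie_antisymm ⟨h1, h2, h3, h4, h5⟩ a (b ^ p), key p, ← zpow_neg]
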